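/- Let X be an ordered normed vector space with closed generating cone X₊ and let CP₁ = {x⊗x : x ∈ X₊, x ≠ 0}. A linear map T : X⁽²⁾ → X⁽²⁾ satisfies T[CP₁] ⊆ CP₁ if and only if either (i) T = P₂(f) for a positive linear map f (f[X₊] ⊆ X₊) with f(x) ≠ 0 for all x ∈ X₊ \ {0}; or (ii) T(A) = φ(A)·B for some B ∈ CP₁ and linear functional φ on X⁽²⁾ with φ(x⊗x) > 0 for all x ∈ X₊ \ {0}. -/

import Mathlib

open TensorProduct

/-- A (pointed) cone in a real vector space. -/
def IsCone {X : Type*} [AddCommGroup X] [Module ℝ X] (K : Set X) : Prop :=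
  0 ∈ K ∧ (∀ x ∈ K, ∀ y ∈ K, x + y ∈ K) ∧
    (∀ (c : ℝ), 0 ≤ c → ∀ x ∈ K, c • x ∈ K) ∧ K ∩ (-K) ⊆ {0}

/-- The second symmetric product space `X⁽²⁾`: the symmetric tensors in `X ⊗ X`. -/
noncomputable def sym2Space (X : Type*) [AddCommGroup X] [Module ℝ X] :
    Submodule ℝ (X ⊗[ℝ] X) :=
  LinearMap.eqLocus (TensorProduct.comm ℝ X X).toLinearMap LinearMap.id

lemma tmul_self_mem_sym2Space {X : Type*} [AddCommGroup X] [Module ℝ X] (x : X) :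
    x ⊗ₜ[ℝ] x ∈ sym2Space X := by
  simp [sym2Space, LinearMap.mem_eqLocus]

/-- The decomposable element `x ⊗ x` viewed in `X⁽²⁾`. -/
noncomputable def sq2 {X : Type*} [AddCommGroup X] [Module ℝ X] (x : X) : sym2Space X :=
  ⟨x ⊗ₜ[ℝ] x, tmul_self_mem_sym2Space x⟩

/-- The set `CP₁` of CP-rank-one elements of `X⁽²⁾`. -/
noncomputable def CPone {X : Type*} [AddCommGroup X] [Module ℝ X] (Xp : Set X) :
    Set (sym2Space X) :=
  {A | ∃ x ∈ Xp, x ≠ 0 ∧ (A : X ⊗[ℝ] X) = x ⊗ₜ[ℝ] x}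

/-! ### Auxiliary dual-space machinery -/

section Dual
variable {V : Type*} [AddCommGroup V] [Module ℝ V]

/-- Pairing of two functionals against a tensor product. -/
noncomputable def dpair (γ δ : Module.Dual ℝ V) : V ⊗[ℝ] V →ₗ[ℝ] ℝ :=
  (TensorProduct.lid ℝ ℝ).toLinearMap ∘ₗ TensorProduct.map γ δ

@[simp] lemma dpair_tmul (γ δ : Module.Dual ℝ V) (a b : V) :
    dpair γ δ (a ⊗ₜ[ℝ] b) = γ a * δ b := by simp [dpair, smul_eq_mul]

lemma dpair_comm (γ δ : Module.Dual ℝ V) (t : V ⊗[ℝ] V) :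
    dpair γ δ (TensorProduct.comm ℝ V V t) = dpair δ γ t := by
  induction t using TensorProduct.induction_on with
  | zero => simp
  | tmul a b => simp [mul_comm]
  | add a b ha hb => simp [map_add, ha, hb]

lemma dpair_add_left (γ γ' δ : Module.Dual ℝ V) (t : V ⊗[ℝ] V) :
    dpair (γ + γ') δ t = dpair γ δ t + dpair γ' δ t := by
  simp [dpair, TensorProduct.map_add_left]

lemma dpair_smul_left (c : ℝ) (γ δ : Module.Dual ℝ V) (t : V ⊗[ℝ] V) :
    dpair (c • γ) δ t = c * dpair γ δ t := by
  simp [dpair, TensorProduct.map_smul_left, smul_eq_mul]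

lemma dpair_add_right (γ δ δ' : Module.Dual ℝ V) (t : V ⊗[ℝ] V) :
    dpair γ (δ + δ') t = dpair γ δ t + dpair γ δ' t := by
  simp [dpair, TensorProduct.map_add_right]

lemma dpair_smul_right (c : ℝ) (γ δ : Module.Dual ℝ V) (t : V ⊗[ℝ] V) :
    dpair γ (c • δ) t = c * dpair γ δ t := by
  simp [dpair, TensorProduct.map_smul_right, smul_eq_mul]

lemma exists_dual_eq_one {p : V} (hp : p ≠ 0) : ∃ γ : Module.Dual ℝ V, γ p = 1 := by
  have := (Module.forall_dual_apply_eq_zero_iff ℝ p).not.mpr hp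
  push_neg at this
  obtain ⟨γ, hγ⟩ := this
  exact ⟨(γ p)⁻¹ • γ, by simp [inv_mul_cancel₀ hγ]⟩

lemma exists_dual_pair {u v : V}
    (h : ∀ c d : ℝ, c • u + d • v = 0 → c = 0 ∧ d = 0) :
    ∃ α β : Module.Dual ℝ V, α u = 1 ∧ α v = 0 ∧ β u = 0 ∧ β v = 1 := by
  have hv : v ∉ Submodule.span ℝ {u} := by
    intro hv
    obtain ⟨c, hc⟩ := Submodule.mem_span_singleton.mp hv
    have := h (-c) 1 (by rw [← hc]; module)
    simpa using this.2
  have hu : u ∉ Submodule.span ℝ {v} := by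
    intro hu
    obtain ⟨c, hc⟩ := Submodule.mem_span_singleton.mp hu
    have := h 1 (-c) (by rw [← hc]; module)
    simpa using this.1
  have hqu : (Submodule.span ℝ {v}).mkQ u ≠ 0 := by
    simpa [Submodule.Quotient.mk_eq_zero] using hu
  have hqv : (Submodule.span ℝ {u}).mkQ v ≠ 0 := by
    simpa [Submodule.Quotient.mk_eq_zero] using hv
  obtain ⟨α', hα'⟩ := exists_dual_eq_one hqu
  obtain ⟨β', hβ'⟩ := exists_dual_eq_one hqv
  refine ⟨α'.comp (Submodule.span ℝ {v}).mkQ, β'.comp (Submodule.span ℝ {u}).mkQ, ?_, ?_, ?_, ?_⟩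
  · simpa using hα'
  · have : (Submodule.span ℝ {v}).mkQ v = 0 := by
      simp [Submodule.Quotient.mk_eq_zero, Submodule.mem_span_singleton_self]
    simp [LinearMap.comp_apply, this]
  · have : (Submodule.span ℝ {u}).mkQ u = 0 := by
      simp [Submodule.Quotient.mk_eq_zero, Submodule.mem_span_singleton_self]
    simp [LinearMap.comp_apply, this]
  · simpa using hβ'

lemma pm_of_sq {p q : V} (h : ∀ γ : Module.Dual ℝ V, (γ p)^2 = (γ q)^2) :
    p = q ∨ p = -q := by
  have key : ∀ γ : Module.Dual ℝ V, γ p = γ q ∨ γ p = -γ q := by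
    intro γ
    have : (γ p - γ q) * (γ p + γ q) = 0 := by ring_nf; nlinarith [h γ]
    rcases mul_eq_zero.mp this with h' | h'
    · exact Or.inl (by linarith)
    · exact Or.inr (by linarith)
  by_contra hc
  push_neg at hc
  obtain ⟨h1, h2⟩ := hc
  have hpq : p - q ≠ 0 := sub_ne_zero.mpr h1
  have hppq : p + q ≠ 0 := by
    intro h'
    exact h2 (by linear_combination (norm := abel) h')
  obtain ⟨γ, hγ⟩ := exists_dual_eq_one hpq
  obtain ⟨δ, hδ⟩ := exists_dual_eq_one hppq
  have hγ' : γ p - γ q = 1 := by simpa [map_sub] using hγ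
  have hδ' : δ p + δ q = 1 := by simpa [map_add] using hδ
  have hγc : γ p = -γ q := by
    rcases key γ with h' | h'
    · exfalso; rw [h'] at hγ'; simp at hγ'
    · exact h'
  have hδc : δ p = δ q := by
    rcases key δ with h' | h'
    · exact h'
    · exfalso; rw [h'] at hδ'; linarith
  rcases key (γ + δ) with h' | h' <;> simp only [LinearMap.add_apply] at h' <;>
    nlinarith [hγ', hδ', hγc, hδc]

lemma tmul_self_pm {a b : V} (ha : a ≠ 0) (h : a ⊗ₜ[ℝ] a = b ⊗ₜ[ℝ] b) :
    b = a ∨ b = -a := by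
  have key : ∀ γ : Module.Dual ℝ V, (γ b)^2 = (γ a)^2 := by
    intro γ
    have := congrArg (dpair γ γ) h
    simp only [dpair_tmul] at this
    nlinarith [this]
  rcases pm_of_sq key with h' | h'
  · exact Or.inl h'
  · exact Or.inr h'

lemma tmul_self_ne_zero {a : V} (ha : a ≠ 0) : a ⊗ₜ[ℝ] a ≠ 0 := by
  obtain ⟨γ, hγ⟩ := exists_dual_eq_one ha
  intro h
  have := congrArg (dpair γ γ) h
  simp [hγ] at this

lemma tmul_smul_self (r : ℝ) (a : V) :
    (r • a) ⊗ₜ[ℝ] (r • a) = (r^2) • (a ⊗ₜ[ℝ] a) := by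
  simp [TensorProduct.smul_tmul, TensorProduct.tmul_smul, smul_smul, pow_two]

end Dual

/-! ### sq2 algebra -/

section sq2lemmas
variable {X : Type*} [AddCommGroup X] [Module ℝ X]

lemma sym2_comm (A : sym2Space X) :
    TensorProduct.comm ℝ X X (A : X ⊗[ℝ] X) = (A : X ⊗[ℝ] X) := A.2

@[simp] lemma sq2_coe (x : X) : ((sq2 x : sym2Space X) : X ⊗[ℝ] X) = x ⊗ₜ[ℝ] x := rfl

@[simp] lemma sq2_zero : (sq2 (0:X)) = 0 := by
  apply Subtype.ext; simp

lemma sq2_smul (c : ℝ) (x : X) : sq2 (c • x) = (c^2) • sq2 x := by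
  apply Subtype.ext
  simp [TensorProduct.smul_tmul', TensorProduct.tmul_smul, smul_smul, pow_two]

lemma sq2_quad (x y : X) (t : ℝ) :
    sq2 (x + t • y) = sq2 x + t • (sq2 (x+y) - sq2 x - sq2 y) + (t^2) • sq2 y := by
  apply Subtype.ext
  push_cast [Submodule.coe_add, Submodule.coe_smul, Submodule.coe_sub]
  simp only [sq2_coe, TensorProduct.tmul_add, TensorProduct.add_tmul,
    TensorProduct.smul_tmul, TensorProduct.tmul_smul]
  module

lemma sq2_sub (a b : X) :
    sq2 (a - b) = (2:ℝ) • sq2 a + (2:ℝ) • sq2 b - sq2 (a+b) := by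
  apply Subtype.ext
  push_cast [Submodule.coe_add, Submodule.coe_smul, Submodule.coe_sub]
  simp only [sq2_coe, TensorProduct.tmul_add, TensorProduct.add_tmul,
    TensorProduct.tmul_sub, TensorProduct.sub_tmul]
  module

lemma span_sq2 {Xp : Set X}
    (hadd : ∀ x ∈ Xp, ∀ y ∈ Xp, x + y ∈ Xp)
    (hgen : ∀ z : X, ∃ a ∈ Xp, ∃ b ∈ Xp, z = a - b)
    (A : sym2Space X) : A ∈ Submodule.span ℝ (sq2 '' Xp) := by
  set M : Submodule ℝ (X ⊗[ℝ] X) :=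
    Submodule.map (sym2Space X).subtype (Submodule.span ℝ (sq2 '' Xp)) with hM
  have hgenM : ∀ c ∈ Xp, c ⊗ₜ[ℝ] c ∈ M := by
    intro c hc
    exact ⟨sq2 c, Submodule.subset_span ⟨c, hc, rfl⟩, rfl⟩
  have hsym1 : ∀ p ∈ Xp, ∀ q ∈ Xp, p ⊗ₜ[ℝ] q + q ⊗ₜ[ℝ] p ∈ M := by
    intro p hp q hq
    have h1 := hgenM _ (hadd p hp q hq)
    have h2 := hgenM p hp
    have h3 := hgenM q hq
    have heq : p ⊗ₜ[ℝ] q + q ⊗ₜ[ℝ] p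
        = (p+q) ⊗ₜ[ℝ] (p+q) - p ⊗ₜ[ℝ] p - q ⊗ₜ[ℝ] q := by
      simp only [TensorProduct.tmul_add, TensorProduct.add_tmul]
      abel
    rw [heq]
    exact sub_mem (sub_mem h1 h2) h3
  have hsym2 : ∀ z w : X, z ⊗ₜ[ℝ] w + w ⊗ₜ[ℝ] z ∈ M := by
    intro z w
    obtain ⟨a, ha, b, hb, hz⟩ := hgen z
    obtain ⟨c, hc, d, hd, hw⟩ := hgen w
    have heq : z ⊗ₜ[ℝ] w + w ⊗ₜ[ℝ] z
        = (a ⊗ₜ[ℝ] c + c ⊗ₜ[ℝ] a) + (b ⊗ₜ[ℝ] d + d ⊗ₜ[ℝ] b)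
          - (a ⊗ₜ[ℝ] d + d ⊗ₜ[ℝ] a) - (b ⊗ₜ[ℝ] c + c ⊗ₜ[ℝ] b) := by
      rw [hz, hw]
      simp only [TensorProduct.tmul_sub, TensorProduct.sub_tmul]
      abel
    rw [heq]
    exact sub_mem (sub_mem (add_mem (hsym1 a ha c hc) (hsym1 b hb d hd))
      (hsym1 a ha d hd)) (hsym1 b hb c hc)
  have hsymEl : ∀ t : X ⊗[ℝ] X, t + TensorProduct.comm ℝ X X t ∈ M := by
    intro t
    induction t using TensorProduct.induction_on with
    | zero => simp only [map_zero, add_zero]; exact zero_mem M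
    | tmul z w => simpa using hsym2 z w
    | add t₁ t₂ h1 h2 =>
      have : t₁ + t₂ + TensorProduct.comm ℝ X X (t₁ + t₂)
          = (t₁ + TensorProduct.comm ℝ X X t₁) + (t₂ + TensorProduct.comm ℝ X X t₂) := by
        rw [map_add]; abel
      rw [this]
      exact add_mem h1 h2
  have hAM : (A : X ⊗[ℝ] X) ∈ M := by
    have h1 := hsymEl (A : X ⊗[ℝ] X)
    rw [sym2_comm A] at h1
    have h2 : (A : X ⊗[ℝ] X) = (2:ℝ)⁻¹ • ((A : X ⊗[ℝ] X) + (A : X ⊗[ℝ] X)) := by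
      rw [← two_smul ℝ, smul_smul]
      norm_num
    rw [h2]
    exact Submodule.smul_mem M _ h1
  obtain ⟨A', hA', hAA⟩ := hAM
  have : A' = A := Subtype.ext hAA
  rwa [← this]

end sq2lemmas

/-! ### quartic coefficient extraction -/

lemma quartic_coeffs {a₀ a₁ a₂ b₀ b₁ b₂ c₀ c₁ c₂ : ℝ}
    (h : ∀ t : ℝ, 0 < t →
      (a₀ + a₁*t + a₂*t^2)*(b₀ + b₁*t + b₂*t^2) = (c₀ + c₁*t + c₂*t^2)^2) :
    a₀*b₁ + a₁*b₀ = 2*c₀*c₁ ∧ a₀*b₂ + a₁*b₁ + a₂*b₀ = 2*c₀*c₂ + c₁^2 ∧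
      a₁*b₂ + a₂*b₁ = 2*c₁*c₂ := by
  set d0 : ℝ := a₀*b₀ - c₀^2 with hd0
  set d1 : ℝ := a₀*b₁ + a₁*b₀ - 2*c₀*c₁ with hd1
  set d2 : ℝ := a₀*b₂ + a₁*b₁ + a₂*b₀ - (2*c₀*c₂ + c₁^2) with hd2
  set d3 : ℝ := a₁*b₂ + a₂*b₁ - 2*c₁*c₂ with hd3
  set d4 : ℝ := a₂*b₂ - c₂^2 with hd4
  have e : ∀ t : ℝ, 0 < t → d0 + d1*t + d2*t^2 + d3*t^3 + d4*t^4 = 0 := by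
    intro t ht
    rw [hd0, hd1, hd2, hd3, hd4]
    linear_combination h t ht
  have e1 := e 1 one_pos
  have e2 := e 2 two_pos
  have e3 := e 3 (by norm_num)
  have e4 := e 4 (by norm_num)
  have e5 := e 5 (by norm_num)
  norm_num at e1 e2 e3 e4 e5
  have h1 : d1 = 0 := by linarith
  have h2 : d2 = 0 := by linarith
  have h3 : d3 = 0 := by linarith
  exact ⟨by linear_combination h1, by linear_combination h2, by linear_combination h3⟩

/-! ### the key rank-one-quadratic-family lemma -/

lemma key_lemma {X : Type*} [NormedAddCommGroup X] [NormedSpace ℝ X] {Xp : Set X}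
    (hK : IsCone Xp) (hclosed : IsClosed Xp)
    {u v : X} (hu : u ∈ Xp) (hv : v ∈ Xp)
    (hindep : ∀ c d : ℝ, c • u + d • v = 0 → c = 0 ∧ d = 0)
    {S : X ⊗[ℝ] X} (hS : TensorProduct.comm ℝ X X S = S)
    {w : ℝ → X} (hw : ∀ t : ℝ, 0 < t → w t ∈ Xp)
    (hid : ∀ t : ℝ, 0 < t →
      w t ⊗ₜ[ℝ] w t = u ⊗ₜ[ℝ] u + t • S + (t^2) • v ⊗ₜ[ℝ] v) :
    ∀ t : ℝ, 0 < t → w t = u + t • v := by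
  obtain ⟨α, β, hαu, hαv, hβu, hβv⟩ := exists_dual_pair hindep
  have hsym : ∀ γ δ : Module.Dual ℝ X, dpair γ δ S = dpair δ γ S := by
    intro γ δ
    conv_lhs => rw [← hS]
    rw [dpair_comm]
  have Eq : ∀ (γ δ : Module.Dual ℝ X) (t : ℝ), 0 < t →
      γ (w t) * δ (w t) = γ u * δ u + dpair γ δ S * t + (γ v * δ v) * t^2 := by
    intro γ δ t ht
    have := congrArg (dpair γ δ) (hid t ht)
    simp only [map_add, map_smul, dpair_tmul, smul_eq_mul] at this
    linarith [this]
  have QC : ∀ γ δ : Module.Dual ℝ X,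
      (γ u * γ u)*(dpair δ δ S) + (dpair γ γ S)*(δ u * δ u) = 2*(γ u * δ u)*(dpair γ δ S) ∧
      (γ u * γ u)*(δ v * δ v) + (dpair γ γ S)*(dpair δ δ S) + (γ v * γ v)*(δ u * δ u)
        = 2*(γ u * δ u)*(γ v * δ v) + (dpair γ δ S)^2 ∧
      (dpair γ γ S)*(δ v * δ v) + (γ v * γ v)*(dpair δ δ S) = 2*(dpair γ δ S)*(γ v * δ v) := by
    intro γ δ
    refine quartic_coeffs ?_
    intro t ht
    have hg := Eq γ γ t ht
    have hd := Eq δ δ t ht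
    have hc := Eq γ δ t ht
    linear_combination (-(δ (w t) * δ (w t))) * hg
      + (-(γ u * γ u + dpair γ γ S * t + (γ v * γ v) * t^2)) * hd
      + (γ (w t) * δ (w t) + (γ u * δ u + dpair γ δ S * t + (γ v * δ v) * t^2)) * hc
  obtain ⟨hR1, hR2, hR3⟩ := QC α β
  simp only [hαu, hαv, hβu, hβv] at hR1 hR2 hR3
  have hββ : dpair β β S = 0 := by linarith
  have hαα : dpair α α S = 0 := by nlinarith
  have heps : (dpair α β S)^2 = 1 := by nlinarith
  set ε := dpair α β S with hε
  have diag : ∀ γ : Module.Dual ℝ X, dpair γ γ S = 2 * ε * (γ u * γ v) := by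
    intro γ
    by_cases hγu : γ u = 0
    · obtain ⟨r1, _, _⟩ := QC γ α
      simp only [hαu, hαv, hαα, hγu] at r1
      rw [hγu]
      simp only [zero_mul, mul_zero]
      linarith
    · set z : ℝ := if γ v = -1 then γ v + 2 else γ v + 1 with hz
      have hz0 : z ≠ 0 := by
        rw [hz]; split_ifs with h'
        · rw [h']; norm_num
        · intro hc; apply h'; linarith
      have hzv : z ≠ γ v := by
        rw [hz]; split_ifs <;> intro hc <;> linarith
      set c' : ℝ := z / γ u with hc'
      have hc'u : c' * γ u = z := by
        rw [hc']; field_simp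
      have hc'0 : c' ≠ 0 := by
        rw [hc']
        exact div_ne_zero hz0 hγu
      set δc : Module.Dual ℝ X := α + c' • β with hδc
      have hδcu : δc u = 1 := by simp [hδc, hαu, hβu]
      have hδcv : δc v = c' := by simp [hδc, hαv, hβv]
      have hδδ : dpair δc δc S = 2 * c' * ε := by
        rw [hδc]
        rw [dpair_add_left, dpair_add_right, dpair_add_right, dpair_smul_left,
          dpair_smul_left, dpair_smul_right, dpair_smul_right]
        rw [hαα, hββ, hsym β α]
        rw [← hε]
        ring
      obtain ⟨r1, _, r3⟩ := QC γ δc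
      simp only [hδcu, hδcv, hδδ] at r1 r3
      have hcomb : c' * (c' * γ u - γ v) * (dpair γ γ S - 2 * ε * (γ u * γ v)) = 0 := by
        linear_combination (γ u) * r3 - (c' * γ v) * r1
      have h1 : c' * γ u - γ v ≠ 0 := by
        rw [hc'u]
        intro hc
        exact hzv (by linarith)
      have := mul_eq_zero.mp hcomb
      rcases this with h' | h'
      · exact absurd (mul_eq_zero.mp h') (by push_neg; exact ⟨hc'0, h1⟩)
      · linarith
  have hwpm : ∀ t : ℝ, 0 < t → w t = u + (ε * t) • v ∨ w t = -(u + (ε * t) • v) := by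
    intro t ht
    have hsq : ∀ γ : Module.Dual ℝ X, (γ (w t))^2 = (γ (u + (ε * t) • v))^2 := by
      intro γ
      have h1 := Eq γ γ t ht
      rw [diag γ] at h1
      have h2 : γ (u + (ε * t) • v) = γ u + (ε * t) * γ v := by
        simp [map_add, map_smul, smul_eq_mul]
      rw [h2]
      linear_combination h1 - (γ v * γ v * t^2) * heps
    exact pm_of_sq hsq
  have hu0 : u ≠ 0 := by
    intro h
    have := (hindep 1 0 (by simp [h])).1
    norm_num at this
  have hv0 : v ≠ 0 := by
    intro h
    have := (hindep 0 1 (by simp [h])).2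
    norm_num at this
  have hpointed := hK.2.2.2
  have hepscases : ε = 1 ∨ ε = -1 := by
    have : (ε - 1) * (ε + 1) = 0 := by linear_combination heps
    rcases mul_eq_zero.mp this with h' | h'
    · left; linarith
    · right; linarith
  rcases hepscases with hε1 | hεm1
  · intro t ht
    rcases hwpm t ht with h' | h'
    · rw [hε1, one_mul] at h'; exact h'
    · exfalso
      rw [hε1, one_mul] at h'
      have hm : u + t • v ∈ Xp := hK.2.1 u hu _ (hK.2.2.1 t ht.le v hv)
      have hmm : u + t • v ∈ Xp ∩ (-Xp) := by
        refine ⟨hm, ?_⟩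
        rw [Set.mem_neg]
        rw [← h']
        exact hw t ht
      have := hpointed hmm
      simp only [Set.mem_singleton_iff] at this
      have := (hindep 1 t (by rw [one_smul]; exact this)).1
      norm_num at this
  · exfalso
    have cover : ∀ t : ℝ, 0 < t → (u - t • v ∈ Xp ∨ t • v - u ∈ Xp) := by
      intro t ht
      rcases hwpm t ht with h' | h'
      · left
        have := hw t ht
        rw [h'] at this
        rw [hεm1] at this
        simpa [neg_smul, sub_eq_add_neg] using this
      · right
        have := hw t ht
        rw [h'] at this
        rw [hεm1] at this
        simpa [neg_smul, sub_eq_add_neg, neg_add_rev] using this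
    have hnegu : -u ∉ Xp := by
      intro h
      have : u ∈ Xp ∩ (-Xp) := ⟨hu, by rwa [Set.mem_neg]⟩
      have := hpointed this
      simp only [Set.mem_singleton_iff] at this
      exact hu0 this
    have hnegv : -v ∉ Xp := by
      intro h
      have : v ∈ Xp ∩ (-Xp) := ⟨hv, by rwa [Set.mem_neg]⟩
      have := hpointed this
      simp only [Set.mem_singleton_iff] at this
      exact hv0 this
    have claim1 : ∃ t : ℝ, 0 < t ∧ u - t • v ∈ Xp := by
      by_contra hcon
      push_neg at hcon
      have hall : ∀ n : ℕ, ((n:ℝ)+1)⁻¹ • v - u ∈ Xp := by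
        intro n
        have hpos : (0:ℝ) < ((n:ℝ)+1)⁻¹ := by positivity
        rcases cover _ hpos with h' | h'
        · exact absurd h' (hcon _ hpos)
        · exact h'
      have htend : Filter.Tendsto (fun n : ℕ => ((n:ℝ)+1)⁻¹ • v - u)
          Filter.atTop (nhds (-u)) := by
        have h0 : Filter.Tendsto (fun n : ℕ => ((n:ℝ)+1)⁻¹) Filter.atTop (nhds 0) :=
          tendsto_one_div_add_atTop_nhds_zero_nat.congr (by intro n; rw [one_div])
        have := (h0.smul_const v).sub_const u
        simpa using this
      exact hnegu (hclosed.mem_of_tendsto htend (Filter.Eventually.of_forall hall))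
    have claim2 : ∃ t : ℝ, 0 < t ∧ t • v - u ∈ Xp := by
      by_contra hcon
      push_neg at hcon
      have hall : ∀ n : ℕ, ((n:ℝ)+1)⁻¹ • u - v ∈ Xp := by
        intro n
        have hpos : (0:ℝ) < ((n:ℝ)+1) := by positivity
        rcases cover _ hpos with h' | h'
        · have := hK.2.2.1 ((n:ℝ)+1)⁻¹ (by positivity) _ h'
          have heq : ((n:ℝ)+1)⁻¹ • (u - ((n:ℝ)+1) • v) = ((n:ℝ)+1)⁻¹ • u - v := by
            rw [smul_sub, smul_smul, inv_mul_cancel₀ (by positivity : ((n:ℝ)+1) ≠ 0), one_smul]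
          rwa [heq] at this
        · exact absurd h' (hcon _ hpos)
      have htend : Filter.Tendsto (fun n : ℕ => ((n:ℝ)+1)⁻¹ • u - v)
          Filter.atTop (nhds (-v)) := by
        have h0 : Filter.Tendsto (fun n : ℕ => ((n:ℝ)+1)⁻¹) Filter.atTop (nhds 0) :=
          tendsto_one_div_add_atTop_nhds_zero_nat.congr (by intro n; rw [one_div])
        have := (h0.smul_const u).sub_const v
        simpa using this
      exact hnegv (hclosed.mem_of_tendsto htend (Filter.Eventually.of_forall hall))
    obtain ⟨t₁, ht₁, hC1⟩ := claim1
    obtain ⟨t₂, ht₂, hC2⟩ := claim2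
    set C : Set ℝ := (fun t => u - t • v) ⁻¹' Xp with hC
    set D : Set ℝ := (fun t => t • v - u) ⁻¹' Xp with hD
    have hcont : Continuous fun t : ℝ => u - t • v := by fun_prop
    have hcont2 : Continuous fun t : ℝ => t • v - u := by fun_prop
    have hCc : IsClosed C := hclosed.preimage hcont
    have hDc : IsClosed D := hclosed.preimage hcont2
    have hicc : IsPreconnected (Set.Icc (min t₁ t₂) (max t₁ t₂)) := isPreconnected_Icc
    have hsub : Set.Icc (min t₁ t₂) (max t₁ t₂) ⊆ C ∪ D := by
      intro t ht
      have htpos : 0 < t := lt_of_lt_of_le (lt_min ht₁ ht₂) ht.1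
      rcases cover t htpos with h' | h'
      · exact Or.inl h'
      · exact Or.inr h'
    have hne1 : (Set.Icc (min t₁ t₂) (max t₁ t₂) ∩ C).Nonempty :=
      ⟨t₁, ⟨min_le_left _ _, le_max_left _ _⟩, hC1⟩
    have hne2 : (Set.Icc (min t₁ t₂) (max t₁ t₂) ∩ D).Nonempty :=
      ⟨t₂, ⟨min_le_right _ _, le_max_right _ _⟩, hC2⟩
    obtain ⟨t₀, _, htC, htD⟩ := isPreconnected_closed_iff.mp hicc C D hCc hDc hsub hne1 hne2
    have : u - t₀ • v ∈ Xp ∩ (-Xp) := by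
      refine ⟨htC, ?_⟩
      rw [Set.mem_neg]
      have : -(u - t₀ • v) = t₀ • v - u := by abel
      rw [this]
      exact htD
    have := hpointed this
    simp only [Set.mem_singleton_iff] at this
    have := (hindep 1 (-t₀) (by rw [one_smul, neg_smul, ← sub_eq_add_neg]; exact this)).1
    norm_num at this

set_option maxHeartbeats 2000000

theorem stmt10 {X : Type*} [NormedAddCommGroup X] [NormedSpace ℝ X]
    (Xp : Set X) (hK : IsCone Xp) (hclosed : IsClosed Xp)
    (hgen : ∀ z : X, ∃ a ∈ Xp, ∃ b ∈ Xp, z = a - b)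
    (T : sym2Space X →ₗ[ℝ] sym2Space X) :
    (∀ A ∈ CPone Xp, T A ∈ CPone Xp) ↔
      (∃ f : X →ₗ[ℝ] X, (∀ x ∈ Xp, f x ∈ Xp) ∧ (∀ x ∈ Xp, x ≠ 0 → f x ≠ 0) ∧
          ∀ x : X, ((T (sq2 x) : sym2Space X) : X ⊗[ℝ] X) = f x ⊗ₜ[ℝ] f x) ∨
      (∃ B ∈ CPone Xp, ∃ φ : sym2Space X →ₗ[ℝ] ℝ,
          (∀ x ∈ Xp, x ≠ 0 → 0 < φ (sq2 x)) ∧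
          ∀ A : sym2Space X, T A = φ A • B) := by
  classical
  constructor
  · intro hpres
    choose af haf bf hbf hgeq using hgen
    -- the induced map on the cone
    have hTCP : ∀ x : X, x ∈ Xp → x ≠ 0 → ∃ z : X, z ∈ Xp ∧ z ≠ 0 ∧
        ((T (sq2 x) : sym2Space X) : X ⊗[ℝ] X) = z ⊗ₜ[ℝ] z := by
      intro x hx hxn
      obtain ⟨z, hz, hzn, hzeq⟩ := hpres (sq2 x) ⟨x, hx, hxn, rfl⟩
      exact ⟨z, hz, hzn, hzeq⟩
    set h : X → X := fun x =>
      if hx : x ∈ Xp ∧ x ≠ 0 then (hTCP x hx.1 hx.2).choose else 0 with hh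
    have hprop : ∀ x, x ∈ Xp → x ≠ 0 → h x ∈ Xp ∧ h x ≠ 0 ∧
        ((T (sq2 x) : sym2Space X) : X ⊗[ℝ] X) = h x ⊗ₜ[ℝ] h x := by
      intro x hx hxn
      rw [hh]
      simp only [dif_pos (And.intro hx hxn)]
      exact (hTCP x hx hxn).choose_spec
    have h0 : h 0 = 0 := by rw [hh]; simp
    have hT0 : ∀ x, x ∈ Xp →
        ((T (sq2 x) : sym2Space X) : X ⊗[ℝ] X) = h x ⊗ₜ[ℝ] h x := by
      intro x hx
      by_cases hxn : x = 0
      · subst hxn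
        rw [h0, sq2_zero, map_zero]
        simp
      · exact (hprop x hx hxn).2.2
    have hpointed := hK.2.2.2
    have hmemne : ∀ {a : X}, a ∈ Xp → -a ∈ Xp → a = 0 := by
      intro a ha hna
      have := hpointed ⟨ha, Set.mem_neg.mpr hna⟩
      simpa using this
    have hsumne : ∀ {a b : X}, a ∈ Xp → a ≠ 0 → b ∈ Xp → a + b ≠ 0 := by
      intro a b ha han hb hc
      apply han
      apply hmemne ha
      have : -a = b := neg_eq_of_add_eq_zero_right hc
      rwa [this]
    have huniq : ∀ {a b : X}, a ∈ Xp → b ∈ Xp → a ≠ 0 →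
        a ⊗ₜ[ℝ] a = b ⊗ₜ[ℝ] b → b = a := by
      intro a b ha hb han heq
      rcases tmul_self_pm han heq with h' | h'
      · exact h'
      · exfalso
        have hnb : -b ∈ Xp := by rw [h', neg_neg]; exact ha
        have hb0 : b = 0 := hmemne hb hnb
        rw [hb0] at heq
        simp only [TensorProduct.tmul_zero] at heq
        exact tmul_self_ne_zero han heq
    -- positive homogeneity of h
    have hsmulz : ∀ x, x ∈ Xp → ∀ c : ℝ, 0 ≤ c → h (c • x) = c • h x := by
      intro x hx c hc
      by_cases hxn : x = 0
      · subst hxn; rw [smul_zero, h0, smul_zero]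
      rcases eq_or_lt_of_le hc with hc0 | hcpos
      · rw [← hc0, zero_smul, h0, zero_smul]
      · have hcx : c • x ∈ Xp := hK.2.2.1 c hc x hx
        have hcxn : c • x ≠ 0 := smul_ne_zero (ne_of_gt hcpos) hxn
        have h1 := (hprop _ hcx hcxn).2.2
        have h2 : ((T (sq2 (c • x)) : sym2Space X) : X ⊗[ℝ] X)
            = (c • h x) ⊗ₜ[ℝ] (c • h x) := by
          rw [sq2_smul, map_smul, Submodule.coe_smul, hT0 x hx, tmul_smul_self]
        have hmem : c • h x ∈ Xp := hK.2.2.1 c hc _ (hprop x hx hxn).1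
        have hne : c • h x ≠ 0 := smul_ne_zero (ne_of_gt hcpos) (hprop x hx hxn).2.1
        exact huniq hmem (hprop _ hcx hcxn).1 hne (h2.symm.trans h1)
    -- the key-lemma wrapper
    have kw : ∀ x y : X, x ∈ Xp → x ≠ 0 → y ∈ Xp → y ≠ 0 →
        (∀ c d : ℝ, c • h x + d • h y = 0 → c = 0 ∧ d = 0) →
        ∀ t : ℝ, 0 < t → h (x + t • y) = h x + t • h y := by
      intro x y hx hxn hy hyn hind
      set S : X ⊗[ℝ] X := ((T (sq2 (x+y) - sq2 x - sq2 y) : sym2Space X) : X ⊗[ℝ] X)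
        with hSdef
      have hScomm : TensorProduct.comm ℝ X X S = S := sym2_comm _
      have hxy0 : ∀ s : ℝ, 0 < s → (x + s • y ∈ Xp ∧ x + s • y ≠ 0) := by
        intro s hs
        have hm : x + s • y ∈ Xp := hK.2.1 x hx _ (hK.2.2.1 s hs.le y hy)
        exact ⟨hm, hsumne hx hxn (hK.2.2.1 s hs.le y hy)⟩
      refine key_lemma hK hclosed (hprop x hx hxn).1 (hprop y hy hyn).1 hind hScomm
        (w := fun s => h (x + s • y)) ?_ ?_
      · intro s hs
        exact (hprop _ (hxy0 s hs).1 (hxy0 s hs).2).1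
      · intro s hs
        have hL : ((T (sq2 (x + s • y)) : sym2Space X) : X ⊗[ℝ] X)
            = h (x + s • y) ⊗ₜ[ℝ] h (x + s • y) :=
          (hprop _ (hxy0 s hs).1 (hxy0 s hs).2).2.2
        have hR : ((T (sq2 (x + s • y)) : sym2Space X) : X ⊗[ℝ] X)
            = h x ⊗ₜ[ℝ] h x + s • S + (s^2) • h y ⊗ₜ[ℝ] h y := by
          rw [sq2_quad x y s, map_add, map_add, map_smul, map_smul]
          push_cast [Submodule.coe_add, Submodule.coe_smul]
          rw [hT0 x hx, hT0 y hy]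
        rw [← hL, hR]
    -- extraction of dependence
    have hdepex : ∀ x y : X, x ∈ Xp → x ≠ 0 → y ∈ Xp → y ≠ 0 →
        ¬(∀ c d : ℝ, c • h x + d • h y = 0 → c = 0 ∧ d = 0) →
        ∃ e : ℝ, 0 < e ∧ h y = e • h x := by
      intro x y hx hxn hy hyn hcon
      push_neg at hcon
      obtain ⟨c, d, hcd, hne⟩ := hcon
      have hhx := hprop x hx hxn
      have hhy := hprop y hy hyn
      by_cases hd : d = 0
      · exfalso
        subst hd
        simp only [zero_smul, add_zero] at hcd
        rcases smul_eq_zero.mp hcd with h' | h'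
        · exact hne h' rfl
        · exact hhx.2.1 h'
      · have h1 : d • h y = (-c) • h x := by
          rw [neg_smul]
          have := neg_eq_of_add_eq_zero_right hcd
          rw [← this]
        have h2 : h y = (d⁻¹ * (-c)) • h x := by
          rw [mul_smul, ← h1, smul_smul, inv_mul_cancel₀ hd, one_smul]
        set e : ℝ := d⁻¹ * (-c) with he
        have hene : e ≠ 0 := by
          intro h'
          rw [h', zero_smul] at h2
          exact hhy.2.1 h2
        rcases lt_trichotomy e 0 with h' | h' | h'
        · exfalso
          have hnegmem : -(h y) ∈ Xp := by
            rw [h2, ← neg_smul]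
            exact hK.2.2.1 (-e) (by linarith) _ hhx.1
          exact hhy.2.1 (hmemne hhy.1 hnegmem)
        · exact absurd h' hene
        · exact ⟨e, h', h2⟩
    by_cases htriv : ∀ x ∈ Xp, x = 0
    · left
      refine ⟨0, ?_, ?_, ?_⟩
      · intro x hx
        simpa using hK.1
      · intro x hx hxn
        exact absurd (htriv x hx) hxn
      · intro x
        have hx0 : x = 0 := by
          rw [hgeq x, htriv _ (haf x), htriv _ (hbf x), sub_zero]
        subst hx0
        rw [sq2_zero, map_zero]
        simp
    · push_neg at htriv
      obtain ⟨x₀, hx₀, hx₀n⟩ := htriv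
      by_cases hdich : ∃ p, (p ∈ Xp ∧ p ≠ 0) ∧ ∃ q, (q ∈ Xp ∧ q ≠ 0) ∧
          (∀ c d : ℝ, c • h p + d • h q = 0 → c = 0 ∧ d = 0)
      · -- case (i): independent images exist
        left
        obtain ⟨p, ⟨hp, hpn⟩, q, ⟨hq, hqn⟩, hpq⟩ := hdich
        have hzex : ∀ x, x ∈ Xp → x ≠ 0 → ∃ z, z ∈ Xp ∧ z ≠ 0 ∧
            (∀ c d : ℝ, c • h x + d • h z = 0 → c = 0 ∧ d = 0) := by
          intro x hx hxn
          by_cases hxp : ∀ c d : ℝ, c • h x + d • h p = 0 → c = 0 ∧ d = 0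
          · exact ⟨p, hp, hpn, hxp⟩
          by_cases hxq : ∀ c d : ℝ, c • h x + d • h q = 0 → c = 0 ∧ d = 0
          · exact ⟨q, hq, hqn, hxq⟩
          exfalso
          obtain ⟨e₁, he₁, heq₁⟩ := hdepex x p hx hxn hp hpn hxp
          obtain ⟨e₂, he₂, heq₂⟩ := hdepex x q hx hxn hq hqn hxq
          have : e₂ • h p + (-e₁) • h q = 0 := by
            rw [heq₁, heq₂, smul_smul, smul_smul]
            rw [← add_smul]
            rw [show e₂ * e₁ + -e₁ * e₂ = 0 by ring, zero_smul]
          have := (hpq e₂ (-e₁) this).1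
          linarith
        have hadd : ∀ x y, x ∈ Xp → x ≠ 0 → y ∈ Xp → y ≠ 0 →
            h (x + y) = h x + h y := by
          intro x y hx hxn hy hyn
          by_cases hxy : ∀ c d : ℝ, c • h x + d • h y = 0 → c = 0 ∧ d = 0
          · have := kw x y hx hxn hy hyn hxy 1 one_pos
            simpa using this
          · obtain ⟨lam, hlam, hyx⟩ := hdepex x y hx hxn hy hyn hxy
            obtain ⟨z, hz, hzn, hxz⟩ := hzex x hx hxn
            have hyz : ∀ c d : ℝ, c • h y + d • h z = 0 → c = 0 ∧ d = 0 := by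
              intro c d hcd
              rw [hyx, smul_smul] at hcd
              have := hxz (c*lam) d hcd
              refine ⟨?_, this.2⟩
              rcases mul_eq_zero.mp this.1 with h' | h'
              · exact h'
              · exact absurd h' (ne_of_gt hlam)
            have hkey2 : ∀ s : ℝ, 0 < s →
                h ((x+y) + s • z) = (h x + h y) + s • h z := by
              intro s hs
              obtain ⟨ee, dd, hee, hdd, hsum, hne⟩ :
                  ∃ ee dd : ℝ, 0 < ee ∧ 0 < dd ∧ ee + dd = s ∧ dd ≠ ee * lam := by
                by_cases hl : lam = 1
                · refine ⟨s/3, 2*s/3, by positivity, by positivity, by ring, ?_⟩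
                  rw [hl, mul_one]
                  intro hcon
                  have : s = 0 := by linarith
                  exact absurd this (ne_of_gt hs)
                · refine ⟨s/2, s/2, by positivity, by positivity, by ring, ?_⟩
                  intro hcon
                  apply hl
                  have h2 : s/2 * (1 - lam) = 0 := by linear_combination hcon
                  rcases mul_eq_zero.mp h2 with h' | h'
                  · exfalso
                    have : s = 0 := by linarith
                    exact absurd this (ne_of_gt hs)
                  · linarith
              have hx'mem : x + ee • z ∈ Xp := hK.2.1 x hx _ (hK.2.2.1 ee hee.le z hz)
              have hx'ne : x + ee • z ≠ 0 := hsumne hx hxn (hK.2.2.1 ee hee.le z hz)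
              have hy'mem : y + dd • z ∈ Xp := hK.2.1 y hy _ (hK.2.2.1 dd hdd.le z hz)
              have hy'ne : y + dd • z ≠ 0 := hsumne hy hyn (hK.2.2.1 dd hdd.le z hz)
              have hx'h : h (x + ee • z) = h x + ee • h z := kw x z hx hxn hz hzn hxz ee hee
              have hy'h : h (y + dd • z) = h y + dd • h z := kw y z hy hyn hz hzn hyz dd hdd
              have hx'y' : ∀ c d : ℝ,
                  c • h (x + ee • z) + d • h (y + dd • z) = 0 → c = 0 ∧ d = 0 := by
                intro c d hcd
                rw [hx'h, hy'h, hyx] at hcd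
                have hcd' : (c + d*lam) • h x + (c*ee + d*dd) • h z = 0 := by
                  rw [add_smul, add_smul, mul_smul, mul_smul, mul_smul]
                  rw [smul_add, smul_add] at hcd
                  rw [← hcd]
                  module
                have h1 := hxz _ _ hcd'
                have hd0 : d = 0 := by
                  have h2 := h1.1
                  have h3 := h1.2
                  have : d * (dd - ee * lam) = 0 := by linear_combination h3 - ee * h2
                  rcases mul_eq_zero.mp this with h' | h'
                  · exact h'
                  · exfalso; apply hne; linarith
                refine ⟨?_, hd0⟩
                have := h1.1
                rw [hd0] at this
                simpa using this
              have hfin := kw _ _ hx'mem hx'ne hy'mem hy'ne hx'y' 1 one_pos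
              have harg : (x + ee • z) + (1:ℝ) • (y + dd • z) = (x+y) + s • z := by
                rw [one_smul, ← hsum, add_smul]
                module
              rw [harg, hx'h, hy'h, one_smul] at hfin
              rw [hfin, ← hsum, add_smul]
              module
            have hxymem : x + y ∈ Xp := hK.2.1 x hx y hy
            have hxyn : x + y ≠ 0 := hsumne hx hxn hy
            have hWprop := hprop _ hxymem hxyn
            set W := h (x+y) with hW
            set V : X := h x + h y with hV
            set Szt : X ⊗[ℝ] X :=
              ((T (sq2 ((x+y)+z) - sq2 (x+y) - sq2 z) : sym2Space X) : X ⊗[ℝ] X) with hSzt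
            have hE : ∀ s : ℝ, 0 < s →
                (V + s • h z) ⊗ₜ[ℝ] (V + s • h z)
                  = W ⊗ₜ[ℝ] W + s • Szt + (s^2) • (h z ⊗ₜ[ℝ] h z) := by
              intro s hs
              have hsm : (x+y) + s • z ∈ Xp := hK.2.1 _ hxymem _ (hK.2.2.1 s hs.le z hz)
              have hsn : (x+y) + s • z ≠ 0 := hsumne hxymem hxyn (hK.2.2.1 s hs.le z hz)
              have h1 : ((T (sq2 ((x+y) + s • z)) : sym2Space X) : X ⊗[ℝ] X)
                  = W ⊗ₜ[ℝ] W + s • Szt + (s^2) • (h z ⊗ₜ[ℝ] h z) := by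
                rw [sq2_quad (x+y) z s, map_add, map_add, map_smul, map_smul]
                push_cast [Submodule.coe_add, Submodule.coe_smul]
                rw [hT0 _ hxymem, hT0 z hz]
              have h2 : ((T (sq2 ((x+y) + s • z)) : sym2Space X) : X ⊗[ℝ] X)
                  = (V + s • h z) ⊗ₜ[ℝ] (V + s • h z) := by
                rw [(hprop _ hsm hsn).2.2, hkey2 s hs]
              rw [← h2, h1]
            have E1 := hE 1 one_pos
            have E2 := hE 2 two_pos
            have hVW : V ⊗ₜ[ℝ] V = W ⊗ₜ[ℝ] W := by
              have hexp : V ⊗ₜ[ℝ] V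
                  = (2:ℝ) • ((V + (1:ℝ) • h z) ⊗ₜ[ℝ] (V + (1:ℝ) • h z))
                    - ((V + (2:ℝ) • h z) ⊗ₜ[ℝ] (V + (2:ℝ) • h z))
                    + (2:ℝ) • (h z ⊗ₜ[ℝ] h z) := by
                simp only [TensorProduct.tmul_add, TensorProduct.add_tmul,
                  TensorProduct.smul_tmul, TensorProduct.tmul_smul]
                module
              rw [E1, E2] at hexp
              rw [hexp]
              module
            rcases tmul_self_pm hWprop.2.1 hVW.symm with h' | h'
            · exact h'.symm
            · exfalso
              have hVmem : V ∈ Xp := hK.2.1 _ (hprop x hx hxn).1 _ (hprop y hy hyn).1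
              have : -W ∈ Xp := by rw [← h']; exact hVmem
              exact hWprop.2.1 (hmemne hWprop.1 this)
        -- add with possible zeros
        have haddz : ∀ a, a ∈ Xp → ∀ b, b ∈ Xp → h (a+b) = h a + h b := by
          intro a ha b hb
          by_cases han : a = 0
          · subst han; rw [h0, zero_add, zero_add]
          by_cases hbn : b = 0
          · subst hbn; rw [h0, add_zero, add_zero]
          exact hadd a b ha han hb hbn
        have wd : ∀ a b a' b' : X, a ∈ Xp → b ∈ Xp → a' ∈ Xp → b' ∈ Xp →
            a - b = a' - b' → h a - h b = h a' - h b' := by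
          intro a b a' b' ha hb ha' hb' heq
          rw [sub_eq_sub_iff_add_eq_add] at heq ⊢
          rw [← haddz a ha b' hb', ← haddz a' ha' b hb, heq]
        set f0 : X → X := fun z => h (af z) - h (bf z) with hf0
        have fval : ∀ z a b, a ∈ Xp → b ∈ Xp → z = a - b → f0 z = h a - h b := by
          intro z a b ha hb hzeq
          rw [hf0]
          exact wd _ _ _ _ (haf z) (hbf z) ha hb (by rw [← hgeq z, ← hzeq])
        have f0add : ∀ z w : X, f0 (z + w) = f0 z + f0 w := by
          intro z w
          rw [fval (z+w) (af z + af w) (bf z + bf w)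
            (hK.2.1 _ (haf z) _ (haf w)) (hK.2.1 _ (hbf z) _ (hbf w))
            (by conv_lhs => rw [hgeq z, hgeq w]
                abel)]
          rw [haddz _ (haf z) _ (haf w), haddz _ (hbf z) _ (hbf w), hf0]
          dsimp only
          abel
        have f0smulnn : ∀ c : ℝ, 0 ≤ c → ∀ z : X, f0 (c • z) = c • f0 z := by
          intro c hc z
          rw [fval (c • z) (c • af z) (c • bf z)
            (hK.2.2.1 c hc _ (haf z)) (hK.2.2.1 c hc _ (hbf z))
            (by conv_lhs => rw [hgeq z]
                rw [smul_sub])]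
          rw [hsmulz _ (haf z) c hc, hsmulz _ (hbf z) c hc, hf0, ← smul_sub]
        have f0neg : ∀ z : X, f0 (-z) = - f0 z := by
          intro z
          rw [fval (-z) (bf z) (af z) (hbf z) (haf z)
            (by conv_lhs => rw [hgeq z]
                abel)]
          rw [hf0, neg_sub]
        have f0smul : ∀ (c : ℝ) (z : X), f0 (c • z) = c • f0 z := by
          intro c z
          rcases le_or_gt 0 c with hc | hc
          · exact f0smulnn c hc z
          · have h1 : c • z = (-c) • (-z) := by rw [smul_neg, neg_smul, neg_neg]
            rw [h1, f0smulnn (-c) (by linarith) (-z), f0neg, smul_neg, neg_smul, neg_neg]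
        set f : X →ₗ[ℝ] X :=
          { toFun := f0, map_add' := f0add, map_smul' := f0smul } with hf
        have hfx : ∀ x, x ∈ Xp → f x = h x := by
          intro x hx
          show f0 x = h x
          rw [fval x x 0 hx hK.1 (by rw [sub_zero]), h0, sub_zero]
        refine ⟨f, ?_, ?_, ?_⟩
        · intro x hx
          rw [hfx x hx]
          by_cases hxn : x = 0
          · subst hxn; rw [h0]; exact hK.1
          · exact (hprop x hx hxn).1
        · intro x hx hxn
          rw [hfx x hx]
          exact (hprop x hx hxn).2.1
        · intro z
          have hfz : f z = h (af z) - h (bf z) := rfl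
          have hz2 : sq2 z = (2:ℝ) • sq2 (af z) + (2:ℝ) • sq2 (bf z) - sq2 (af z + bf z) := by
            conv_lhs => rw [hgeq z]
            exact sq2_sub _ _
          rw [hz2, map_sub, map_add, map_smul, map_smul]
          push_cast [Submodule.coe_add, Submodule.coe_smul, Submodule.coe_sub]
          rw [hT0 _ (haf z), hT0 _ (hbf z), hT0 _ (hK.2.1 _ (haf z) _ (hbf z)),
            haddz _ (haf z) _ (hbf z), hfz]
          simp only [TensorProduct.tmul_add, TensorProduct.add_tmul,
            TensorProduct.tmul_sub, TensorProduct.sub_tmul]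
          module
      · -- case (ii): all images are proportional
        right
        have hdep : ∀ q, q ∈ Xp → q ≠ 0 → ∃ e : ℝ, 0 < e ∧ h q = e • h x₀ := by
          intro q hq hqn
          apply hdepex x₀ q hx₀ hx₀n hq hqn
          intro hcon
          exact hdich ⟨x₀, ⟨hx₀, hx₀n⟩, q, ⟨hq, hqn⟩, hcon⟩
        have hb := hprop x₀ hx₀ hx₀n
        set b : X := h x₀ with hbdef
        set B : sym2Space X := T (sq2 x₀) with hB
        have hBcoe : (B : X ⊗[ℝ] X) = b ⊗ₜ[ℝ] b := hb.2.2
        have hBCP : B ∈ CPone Xp := ⟨b, hb.1, hb.2.1, hBcoe⟩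
        have hmu : ∀ x, x ∈ Xp → x ≠ 0 → ∃ μ : ℝ, 0 < μ ∧ T (sq2 x) = (μ^2) • B := by
          intro x hx hxn
          obtain ⟨e, he, heq⟩ := hdep x hx hxn
          refine ⟨e, he, ?_⟩
          apply Subtype.ext
          rw [Submodule.coe_smul, hBcoe, (hprop x hx hxn).2.2, heq, tmul_smul_self]
        have hrange : ∀ A : sym2Space X, T A ∈ Submodule.span ℝ {B} := by
          intro A
          have hA := span_sq2 hK.2.1 (fun z => ⟨af z, haf z, bf z, hbf z, hgeq z⟩) A
          have hle : Submodule.span ℝ (sq2 '' Xp)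
              ≤ Submodule.comap T (Submodule.span ℝ {B}) := by
            rw [Submodule.span_le]
            rintro _ ⟨c, hc, rfl⟩
            simp only [SetLike.mem_coe, Submodule.mem_comap]
            by_cases hcn : c = 0
            · subst hcn
              rw [sq2_zero, map_zero]
              exact zero_mem _
            · obtain ⟨μ, hμ, hμeq⟩ := hmu c hc hcn
              rw [hμeq]
              exact Submodule.smul_mem _ _ (Submodule.mem_span_singleton_self B)
          exact hle hA
        have hBne : B ≠ 0 := by
          intro hc
          rw [hc] at hBcoe
          exact tmul_self_ne_zero hb.2.1 ((ZeroMemClass.coe_zero _).symm.trans hBcoe).symm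
        obtain ⟨ψ, hψ⟩ := exists_dual_eq_one hBne
        refine ⟨B, hBCP, ψ.comp T, ?_, ?_⟩
        · intro x hx hxn
          obtain ⟨μ, hμ, hμeq⟩ := hmu x hx hxn
          have : (ψ.comp T) (sq2 x) = μ^2 := by
            rw [LinearMap.comp_apply, hμeq, map_smul, hψ, smul_eq_mul, mul_one]
          rw [this]
          positivity
        · intro A
          obtain ⟨c, hc⟩ := Submodule.mem_span_singleton.mp (hrange A)
          have : (ψ.comp T) A = c := by
            rw [LinearMap.comp_apply, ← hc, map_smul, hψ, smul_eq_mul, mul_one]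
          rw [this, ← hc]
  · rintro (⟨f, hf1, hf2, hf3⟩ | ⟨B, ⟨b, hbmem, hbn, hBcoe⟩, φ, hφpos, hφ⟩) A hA
    · obtain ⟨x, hx, hxn, hAcoe⟩ := hA
      have hAeq : A = sq2 x := Subtype.ext hAcoe
      refine ⟨f x, hf1 x hx, hf2 x hx hxn, ?_⟩
      rw [hAeq]
      exact hf3 x
    · obtain ⟨x, hx, hxn, hAcoe⟩ := hA
      have hAeq : A = sq2 x := Subtype.ext hAcoe
      have hpos : 0 < φ A := by
        rw [hAeq]
        exact hφpos x hx hxn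
      refine ⟨Real.sqrt (φ A) • b, hK.2.2.1 _ (Real.sqrt_nonneg _) b hbmem,
        smul_ne_zero (by positivity) hbn, ?_⟩
      rw [hφ A, Submodule.coe_smul, hBcoe, tmul_smul_self, Real.sq_sqrt hpos.le]
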